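/- Let β ∈ ℂ with |Re β| < 1/2 and δ > 0 with Re β + δ < 1/2 and -Re β + δ < 1/2. Suppose an integral operator K_e on L^{2,-β,n}(0,∞) has kernel satisfying |K_e(x,y)| ≤ ε_n (n+x)^{-1/2-Re β-δ}(n+y)^{-1/2+Re β-δ} for all x,y > 0, where ε_n → 0. Then the operator norm of K_e on L^{2,-β,n}(0,∞) is at most C ε_n n^{-2δ} for a constant C depending only on β and δ; in particular ‖K_e‖ = o(n^{-δ}) as n → ∞. -/

import Mathlib

open Complex MeasureTheory Set
open scoped ENNReal

lemma aux_map {c : ℝ} (hc : 0 < c) :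
    Measure.map (c * ·) (volume.restrict (Ioi (0:ℝ)))
      = ENNReal.ofReal c⁻¹ • volume.restrict (Ioi (0:ℝ)) := by
  have hpre : (c * ·) ⁻¹' (Ioi (0:ℝ)) = Ioi 0 := by
    ext u; simp only [mem_preimage, mem_Ioi]
    exact ⟨fun hu => by nlinarith, fun hu => mul_pos hc hu⟩
  rw [← hpre, ← Measure.restrict_map (measurable_const_mul c) measurableSet_Ioi,
    Real.map_volume_mul_left hc.ne', Measure.restrict_smul, hpre, abs_of_pos (inv_pos.2 hc)]

lemma aux_qmp {c : ℝ} (hc : 0 < c) :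
    Measure.QuasiMeasurePreserving (c * ·) (volume.restrict (Ioi (0:ℝ)))
      (volume.restrict (Ioi (0:ℝ))) :=
  ⟨measurable_const_mul c, by rw [aux_map hc]; exact Measure.smul_absolutelyContinuous⟩

lemma aux_scale {c : ℝ} (hc : 0 < c) (h : ℝ → ℝ≥0∞)
    (hm : AEMeasurable h (volume.restrict (Ioi (0:ℝ)))) :
    ∫⁻ y in Ioi (0:ℝ), h y = ENNReal.ofReal c * ∫⁻ u in Ioi (0:ℝ), h (c * u) := by
  have hm' : AEMeasurable h (Measure.map (c * ·) (volume.restrict (Ioi (0:ℝ)))) := by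
    rw [aux_map hc]; exact hm.smul_measure _
  have := lintegral_map' hm' (measurable_const_mul c).aemeasurable
  rw [aux_map hc] at this
  simp only [lintegral_smul_measure, smul_eq_mul] at this
  rw [← this, ← mul_assoc, ← ENNReal.ofReal_mul hc.le, mul_inv_cancel₀ hc.ne',
    ENNReal.ofReal_one, one_mul]

lemma aux_A_fin {p : ℝ} (hp : 1 < p) :
    ∫⁻ x in Ioi (0:ℝ), ENNReal.ofReal ((1+x) ^ (-p)) ≠ ∞ := by
  have hsplit : Ioi (0:ℝ) = Ioc 0 1 ∪ Ioi 1 := by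
    rw [Ioc_union_Ioi_eq_Ioi]; norm_num
  rw [hsplit, lintegral_union measurableSet_Ioi (by simp [disjoint_left])]
  have h1 : ∫⁻ x in Ioc (0:ℝ) 1, ENNReal.ofReal ((1+x) ^ (-p)) ≤ 1 := by
    calc ∫⁻ x in Ioc (0:ℝ) 1, ENNReal.ofReal ((1+x) ^ (-p))
        ≤ ∫⁻ _x in Ioc (0:ℝ) 1, 1 := by
          refine setLIntegral_mono' measurableSet_Ioc fun x hx => ?_
          rw [← ENNReal.ofReal_one]
          exact ENNReal.ofReal_le_ofReal
            (Real.rpow_le_one_of_one_le_of_nonpos (by linarith [hx.1]) (by linarith))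
      _ = 1 := by simp [Real.volume_Ioc]
  have h2 : ∫⁻ x in Ioi (1:ℝ), ENNReal.ofReal ((1+x) ^ (-p)) < ∞ := by
    have hint : IntegrableOn (fun x : ℝ => x ^ (-p)) (Ioi 1) :=
      integrableOn_Ioi_rpow_of_lt (by linarith) one_pos
    calc ∫⁻ x in Ioi (1:ℝ), ENNReal.ofReal ((1+x) ^ (-p))
        ≤ ∫⁻ x in Ioi (1:ℝ), (‖x ^ (-p)‖₊ : ℝ≥0∞) := by
          refine setLIntegral_mono' measurableSet_Ioi fun x hx => ?_
          refine le_trans (ENNReal.ofReal_le_ofReal ?_) (Real.ofReal_le_enorm _)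
          exact Real.rpow_le_rpow_of_nonpos (by linarith [mem_Ioi.1 hx])
            (by linarith [mem_Ioi.1 hx]) (by linarith)
      _ < ∞ := hint.2
  exact ENNReal.add_ne_top.2 ⟨(h1.trans_lt ENNReal.one_lt_top).ne, h2.ne⟩

/-- If an integral operator `K_e` on `L^{2,-β,n}(0,∞)` has kernel bounded by
`ε_n (n+x)^{-1/2-Re β-δ} (n+y)^{-1/2+Re β-δ}`, then its operator norm is at most
`C ε_n n^{-2δ}` for a constant `C` depending only on `β` and `δ`; in particular, if
`ε_n → 0`, then `‖K_e‖ = o(n^{-δ})` as `n → ∞`. -/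
theorem stmt9 (β : ℂ) (δ : ℝ) (hβ : |β.re| < 1/2) (hδ : 0 < δ)
    (h1 : β.re + δ < 1/2) (h2 : -β.re + δ < 1/2) :
    ∃ C : ℝ, 0 < C ∧ ∀ n : ℕ, 1 ≤ n → ∀ ε : ℝ, 0 ≤ ε → ∀ Ke : ℝ → ℝ → ℂ,
      (∀ x y : ℝ, 0 < x → 0 < y →
        ‖Ke x y‖ ≤ ε * ((n : ℝ) + x) ^ (-(1/2 : ℝ) - β.re - δ)
          * ((n : ℝ) + y) ^ (-(1/2 : ℝ) + β.re - δ)) →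
      ∀ f : ℝ → ℂ, AEStronglyMeasurable f (volume.restrict (Ioi (0:ℝ))) →
        eLpNorm (fun x : ℝ => ((1 + x : ℝ) : ℂ) ^ β *
            ∫ y in Ioi (0:ℝ), Ke ((n : ℝ) * x) y * f y) 2 (volume.restrict (Ioi (0:ℝ)))
          ≤ ENNReal.ofReal (C * ε * (n : ℝ) ^ (-2 * δ)) *
            eLpNorm (fun x : ℝ => ((1 + x : ℝ) : ℂ) ^ β * f ((n : ℝ) * x)) 2
              (volume.restrict (Ioi (0:ℝ))) := by
  set a := β.re with ha
  set r : ℝ := -(1/2 : ℝ) - a - δ with hr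
  set s : ℝ := -(1/2 : ℝ) + a - δ with hs
  set A : ℝ≥0∞ := ∫⁻ x in Ioi (0:ℝ), ENNReal.ofReal ((1+x) ^ (-(1+2*δ))) with hA
  have hAne : A ≠ ∞ := aux_A_fin (by linarith)
  refine ⟨A.toReal + 1, by positivity, ?_⟩
  intro n hn ε hε Ke hKe f hf
  have hn0 : (0:ℝ) < n := by exact_mod_cast Nat.lt_of_lt_of_le Nat.zero_lt_one hn
  set G := eLpNorm (fun x : ℝ => ((1 + x : ℝ) : ℂ) ^ β * f ((n : ℝ) * x)) 2
      (volume.restrict (Ioi (0:ℝ))) with hG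
  -- norm of the complex power
  have hcpow : ∀ x : ℝ, 0 < x → (‖((1 + x : ℝ) : ℂ) ^ β‖₊ : ℝ≥0∞)
      = ENNReal.ofReal ((1+x) ^ a) := by
    intro x hx
    rw [← enorm_eq_nnnorm, ← ofReal_norm,
      Complex.norm_cpow_eq_rpow_re_of_pos (by linarith)]
  -- measurability facts
  have hfn : AEMeasurable (fun u : ℝ => (‖f ((n:ℝ) * u)‖₊ : ℝ≥0∞))
      (volume.restrict (Ioi (0:ℝ))) :=
    hf.enorm.comp_quasiMeasurePreserving (aux_qmp hn0)
  have hmeas_pow : ∀ c : ℝ, Measurable fun u : ℝ => ENNReal.ofReal ((1+u) ^ c) := by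
    intro c
    exact ((measurable_const.add measurable_id).pow measurable_const).ennreal_ofReal
  -- the weighted L² norm of g as a lintegral
  have hG' : G = (∫⁻ u in Ioi (0:ℝ),
      (ENNReal.ofReal ((1+u) ^ a) * ‖f ((n:ℝ) * u)‖₊) ^ (2:ℝ)) ^ (1/2 : ℝ) := by
    rw [hG, eLpNorm_eq_lintegral_rpow_enorm_toReal two_ne_zero ENNReal.ofNat_ne_top]
    simp only [ENNReal.toReal_ofNat]
    congr 1
    refine setLIntegral_congr_fun measurableSet_Ioi (fun u hu => ?_)
    rw [enorm_mul, enorm_eq_nnnorm, enorm_eq_nnnorm, hcpow u hu]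
  -- Hölder / Cauchy–Schwarz
  have holder : ∫⁻ u in Ioi (0:ℝ), ENNReal.ofReal ((1+u) ^ (-(1/2:ℝ) - δ)) *
        (ENNReal.ofReal ((1+u) ^ a) * ‖f ((n:ℝ) * u)‖₊)
      ≤ A ^ (1/2 : ℝ) * G := by
    have hpq : Real.HolderConjugate 2 2 := ⟨by norm_num, by norm_num, by norm_num⟩
    have := ENNReal.lintegral_mul_le_Lp_mul_Lq (volume.restrict (Ioi (0:ℝ))) hpq
      (hmeas_pow (-(1/2:ℝ) - δ)).aemeasurable
      (((hmeas_pow a).aemeasurable).mul hfn)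
    refine le_trans (le_of_eq (by rfl)) (this.trans ?_)
    rw [hG']
    gcongr
    rw [hA]
    refine le_of_eq (setLIntegral_congr_fun measurableSet_Ioi (fun u hu => ?_))
    have hu1 : (0:ℝ) < 1 + u := by have := mem_Ioi.1 hu; linarith
    rw [ENNReal.ofReal_rpow_of_pos (Real.rpow_pos_of_pos hu1 _), ← Real.rpow_mul hu1.le,
      show (-(1/2:ℝ) - δ) * 2 = -(1+2*δ) by ring]
    exact le_rfl
  -- the inner weighted integral I
  set I : ℝ≥0∞ := ∫⁻ y in Ioi (0:ℝ), ENNReal.ofReal (((n:ℝ) + y) ^ s) * ‖f y‖₊ with hI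
  have hImeas : AEMeasurable (fun y : ℝ => ENNReal.ofReal (((n:ℝ) + y) ^ s) * (‖f y‖₊ : ℝ≥0∞))
      (volume.restrict (Ioi (0:ℝ))) :=
    (((measurable_const.add measurable_id).pow
      measurable_const).ennreal_ofReal).aemeasurable.mul hf.enorm
  have hIbound : I ≤ ENNReal.ofReal ((n:ℝ) ^ (1+s)) * (A ^ (1/2:ℝ) * G) := by
    rw [hI, aux_scale hn0 _ hImeas]
    have step : ∫⁻ u in Ioi (0:ℝ), ENNReal.ofReal (((n:ℝ) + (n:ℝ)*u) ^ s) * ‖f ((n:ℝ)*u)‖₊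
        = ENNReal.ofReal ((n:ℝ) ^ s) *
          ∫⁻ u in Ioi (0:ℝ), ENNReal.ofReal ((1+u) ^ s) * ‖f ((n:ℝ)*u)‖₊ := by
      rw [← lintegral_const_mul' _ _ ENNReal.ofReal_ne_top]
      refine setLIntegral_congr_fun measurableSet_Ioi (fun u hu => ?_)
      have hu1 : (0:ℝ) < 1 + u := by have := mem_Ioi.1 hu; linarith
      rw [show (n:ℝ) + (n:ℝ)*u = (n:ℝ)*(1+u) by ring, Real.mul_rpow hn0.le hu1.le,
        ENNReal.ofReal_mul (Real.rpow_nonneg hn0.le _), mul_assoc]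
    rw [step, ← mul_assoc, ← ENNReal.ofReal_mul hn0.le,
      show (n:ℝ) * (n:ℝ) ^ s = (n:ℝ) ^ (1+s) by rw [Real.rpow_add hn0, Real.rpow_one]]
    refine mul_le_mul_right ?_ _
    refine le_trans (le_of_eq ?_) holder
    refine setLIntegral_congr_fun measurableSet_Ioi (fun u hu => ?_)
    have hu1 : (0:ℝ) < 1 + u := by have := mem_Ioi.1 hu; linarith
    rw [show s = (-(1/2:ℝ) - δ) + a by rw [hs]; ring, Real.rpow_add hu1,
      ENNReal.ofReal_mul (Real.rpow_nonneg hu1.le _), mul_assoc]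
  -- case ε = 0
  rcases eq_or_lt_of_le hε with hε0 | hεpos
  · have hzero : ∀ x : ℝ, x ∈ Ioi (0:ℝ) →
        ((1 + x : ℝ) : ℂ) ^ β * ∫ y in Ioi (0:ℝ), Ke ((n:ℝ)*x) y * f y = (0 : ℝ → ℂ) x := by
      intro x hx
      have hx0 : (0:ℝ) < (n:ℝ) * x := mul_pos hn0 (mem_Ioi.1 hx)
      have hK0 : ∀ y ∈ Ioi (0:ℝ), Ke ((n:ℝ)*x) y * f y = 0 := by
        intro y hy
        have hb := hKe ((n:ℝ)*x) y hx0 (mem_Ioi.1 hy)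
        rw [← hε0, zero_mul, zero_mul] at hb
        rw [norm_le_zero_iff.1 hb, zero_mul]
      rw [setIntegral_congr_fun measurableSet_Ioi hK0]
      simp
    have heq : (fun x : ℝ => ((1 + x : ℝ) : ℂ) ^ β * ∫ y in Ioi (0:ℝ), Ke ((n:ℝ)*x) y * f y)
        =ᵐ[volume.restrict (Ioi (0:ℝ))] 0 :=
      (ae_restrict_iff' measurableSet_Ioi).2 (ae_of_all _ hzero)
    rw [eLpNorm_congr_ae heq, eLpNorm_zero]
    exact bot_le
  -- case G = ∞
  by_cases hGtop : G = ∞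
  · rw [hGtop, ENNReal.mul_top (ne_of_gt (ENNReal.ofReal_pos.2
      (mul_pos (mul_pos (by positivity) hεpos) (Real.rpow_pos_of_pos hn0 _))))]
    exact le_top
  -- main case
  have hIne : I ≠ ∞ :=
    ne_top_of_le_ne_top (ENNReal.mul_ne_top ENNReal.ofReal_ne_top
      (ENNReal.mul_ne_top (ENNReal.rpow_ne_top_of_nonneg (by norm_num) hAne) hGtop)) hIbound
  have hinner : ∀ x : ℝ, x ∈ Ioi (0:ℝ) →
      (‖∫ y in Ioi (0:ℝ), Ke ((n:ℝ)*x) y * f y‖₊ : ℝ≥0∞)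
        ≤ ENNReal.ofReal (ε * ((n:ℝ) + (n:ℝ)*x) ^ r) * I := by
    intro x hx
    have hx0 : (0:ℝ) < (n:ℝ) * x := mul_pos hn0 (mem_Ioi.1 hx)
    calc (‖∫ y in Ioi (0:ℝ), Ke ((n:ℝ)*x) y * f y‖₊ : ℝ≥0∞)
        ≤ ∫⁻ y in Ioi (0:ℝ), ‖Ke ((n:ℝ)*x) y * f y‖₊ :=
          enorm_integral_le_lintegral_enorm _
      _ ≤ ∫⁻ y in Ioi (0:ℝ), ENNReal.ofReal (ε * ((n:ℝ) + (n:ℝ)*x) ^ r) *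
            (ENNReal.ofReal (((n:ℝ)+y) ^ s) * ‖f y‖₊) := by
          refine setLIntegral_mono' measurableSet_Ioi fun y hy => ?_
          rw [nnnorm_mul, ENNReal.coe_mul, ← mul_assoc,
            ← ENNReal.ofReal_mul (mul_nonneg hε (Real.rpow_nonneg
              (by nlinarith [mem_Ioi.1 hx, hn0.le] : (0:ℝ) ≤ (n:ℝ) + (n:ℝ)*x) _))]
          refine mul_le_mul_left ?_ _
          rw [← enorm_eq_nnnorm, ← ofReal_norm]
          exact ENNReal.ofReal_le_ofReal (hKe _ _ hx0 (mem_Ioi.1 hy))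
      _ = ENNReal.ofReal (ε * ((n:ℝ)+(n:ℝ)*x) ^ r) * I :=
          lintegral_const_mul' _ _ ENNReal.ofReal_ne_top
  set K := ENNReal.ofReal (ε * (n:ℝ) ^ r) * I with hK
  have hKne : K ≠ ∞ := ENNReal.mul_ne_top ENNReal.ofReal_ne_top hIne
  have main : eLpNorm (fun x : ℝ => ((1 + x : ℝ) : ℂ) ^ β *
        ∫ y in Ioi (0:ℝ), Ke ((n:ℝ)*x) y * f y) 2 (volume.restrict (Ioi (0:ℝ)))
      ≤ K * A ^ (1/2:ℝ) := by
    rw [eLpNorm_eq_lintegral_rpow_enorm_toReal two_ne_zero ENNReal.ofNat_ne_top]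
    simp only [ENNReal.toReal_ofNat]
    calc (∫⁻ x in Ioi (0:ℝ), (‖((1 + x : ℝ) : ℂ) ^ β *
            ∫ y in Ioi (0:ℝ), Ke ((n:ℝ)*x) y * f y‖₊ : ℝ≥0∞) ^ (2:ℝ)) ^ (1/2:ℝ)
        ≤ (∫⁻ x in Ioi (0:ℝ),
            (K * ENNReal.ofReal ((1+x) ^ (-(1/2:ℝ)-δ))) ^ (2:ℝ)) ^ (1/2:ℝ) := by
          refine ENNReal.rpow_le_rpow ?_ (by norm_num)
          refine setLIntegral_mono' measurableSet_Ioi fun x hx => ?_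
          refine ENNReal.rpow_le_rpow ?_ (by norm_num)
          have hx1 : (0:ℝ) < 1 + x := by have := mem_Ioi.1 hx; linarith
          rw [nnnorm_mul, ENNReal.coe_mul, hcpow x (mem_Ioi.1 hx)]
          have hid : (1+x) ^ a * (ε * ((n:ℝ) ^ r * (1+x) ^ r))
              = (ε * (n:ℝ) ^ r) * (1+x) ^ (-(1/2:ℝ)-δ) := by
            rw [show -(1/2:ℝ)-δ = a + r by rw [hr]; ring, Real.rpow_add hx1]
            ring
          calc ENNReal.ofReal ((1+x) ^ a) *
                (‖∫ y in Ioi (0:ℝ), Ke ((n:ℝ)*x) y * f y‖₊ : ℝ≥0∞)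
              ≤ ENNReal.ofReal ((1+x) ^ a) *
                  (ENNReal.ofReal (ε * ((n:ℝ) + (n:ℝ)*x) ^ r) * I) :=
                mul_le_mul_right (hinner x hx) _
            _ = K * ENNReal.ofReal ((1+x) ^ (-(1/2:ℝ)-δ)) := by
                rw [hK, show (n:ℝ) + (n:ℝ)*x = (n:ℝ)*(1+x) by ring,
                  Real.mul_rpow hn0.le hx1.le, ← mul_assoc,
                  ← ENNReal.ofReal_mul (Real.rpow_nonneg hx1.le _), hid,
                  ENNReal.ofReal_mul (mul_nonneg hε (Real.rpow_nonneg hn0.le _))]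
                ring
      _ = (K ^ (2:ℝ) * A) ^ (1/2:ℝ) := by
          congr 1
          rw [hA, ← lintegral_const_mul' _ _
            (ENNReal.rpow_ne_top_of_nonneg (by norm_num) hKne)]
          refine setLIntegral_congr_fun measurableSet_Ioi (fun x hx => ?_)
          have hx1 : (0:ℝ) < 1 + x := by have := mem_Ioi.1 hx; linarith
          rw [ENNReal.mul_rpow_of_nonneg _ _ (by norm_num : (0:ℝ) ≤ 2),
            ENNReal.ofReal_rpow_of_pos (Real.rpow_pos_of_pos hx1 _),
            ← Real.rpow_mul hx1.le, show (-(1/2:ℝ)-δ) * 2 = -(1+2*δ) by ring]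
      _ = K * A ^ (1/2:ℝ) := by
          rw [ENNReal.mul_rpow_of_nonneg _ _ (by norm_num : (0:ℝ) ≤ 1/2),
            ← ENNReal.rpow_mul, show (2:ℝ) * (1/2) = 1 by norm_num, ENNReal.rpow_one]
  refine main.trans ?_
  calc K * A ^ (1/2:ℝ)
      ≤ (ENNReal.ofReal (ε * (n:ℝ) ^ r) *
          (ENNReal.ofReal ((n:ℝ) ^ (1+s)) * (A ^ (1/2:ℝ) * G))) * A ^ (1/2:ℝ) := by
        rw [hK]
        exact mul_le_mul_left (mul_le_mul_right hIbound _) _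
    _ = (ENNReal.ofReal (ε * (n:ℝ) ^ r) * ENNReal.ofReal ((n:ℝ) ^ (1+s))) *
          (A ^ (1/2:ℝ) * A ^ (1/2:ℝ)) * G := by ring
    _ = ENNReal.ofReal (ε * (n:ℝ) ^ (-2*δ)) * A * G := by
        rw [← ENNReal.ofReal_mul (mul_nonneg hε (Real.rpow_nonneg hn0.le _)), mul_assoc ε,
          ← Real.rpow_add hn0, show r + (1+s) = -2*δ by rw [hr, hs]; ring,
          ← ENNReal.rpow_add_of_nonneg (1/2 : ℝ) (1/2 : ℝ) (by norm_num) (by norm_num),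
          show (1/2:ℝ) + 1/2 = 1 by norm_num, ENNReal.rpow_one]
    _ ≤ ENNReal.ofReal ((A.toReal + 1) * ε * (n:ℝ) ^ (-2*δ)) * G := by
        refine mul_le_mul_left ?_ _
        have hcomb : ENNReal.ofReal (ε * (n:ℝ) ^ (-2*δ)) * A
            = ENNReal.ofReal (ε * (n:ℝ) ^ (-2*δ) * A.toReal) := by
          rw [ENNReal.ofReal_mul (mul_nonneg hε (Real.rpow_nonneg hn0.le _)),
            ENNReal.ofReal_toReal hAne]
        rw [hcomb]
        refine ENNReal.ofReal_le_ofReal ?_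
        have h3 : (0:ℝ) ≤ ε * (n:ℝ) ^ (-2*δ) := mul_nonneg hε (Real.rpow_nonneg hn0.le _)
        have h4 : (0:ℝ) ≤ A.toReal := ENNReal.toReal_nonneg
        have h5 : (A.toReal + 1) * (ε * (n:ℝ) ^ (-2*δ))
            = ε * (n:ℝ) ^ (-2*δ) * A.toReal + ε * (n:ℝ) ^ (-2*δ) := by ring
        linarith
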